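/- Let X be a Banach space, I a non-empty set, and (T_i)_{i ∈ I} a uniformly norm-bounded family of bounded linear operators on X. Let T̂ be the induced multiplication operator on ℓ^∞(I; X). If T̂ is bijective (hence has a bounded inverse by the open mapping theorem), then each T_i is bijective and ‖T_i^{-1}‖ ≤ ‖T̂^{-1}‖ for every i ∈ I; in particular sup_{i ∈ I} ‖T_i^{-1}‖ < ∞. -/

import Mathlib

set_option maxHeartbeats 1000000

open scoped ENNReal

/-- If the multiplication operator `T̂` on `ℓ^∞(I; X)` is bijective (hence
boundedly invertible), then each `T i` is bijective with `‖(T i)⁻¹‖ ≤ ‖T̂⁻¹‖`; in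
particular the family of inverses is uniformly norm-bounded. -/
theorem stmt2 {𝕜 X I : Type*} [RCLike 𝕜] [NormedAddCommGroup X] [NormedSpace 𝕜 X]
    [CompleteSpace X] [Nonempty I] (T : I → X →L[𝕜] X)
    (hT : BddAbove (Set.range fun i => ‖T i‖))
    (That : lp (fun _ : I => X) ∞ →L[𝕜] lp (fun _ : I => X) ∞)
    (hThat : ∀ (f : lp (fun _ : I => X) ∞) (i : I), That f i = T i (f i))
    (hbij : Function.Bijective That) :
    (∀ i : I, Function.Bijective (T i) ∧ ‖Ring.inverse (T i)‖ ≤ ‖Ring.inverse That‖) ∧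
      BddAbove (Set.range fun i => ‖Ring.inverse (T i)‖) := by
  classical
  -- each T i is bijective
  have hbijT : ∀ i, Function.Bijective (T i) := by
    intro i
    constructor
    · intro x y hxy
      have hz : T i (x - y) = 0 := by simp [map_sub, hxy]
      have h0 : That (lp.single ∞ i (x - y)) = 0 := by
        apply lp.ext
        funext j
        rw [lp.coeFn_zero]
        simp only [Pi.zero_apply, hThat]
        by_cases hj : j = i
        · subst hj; rw [lp.single_apply_self]; exact hz
        · rw [lp.single_apply_ne _ _ _ hj]; simp
      have := hbij.injective (by rw [h0, map_zero] : That (lp.single ∞ i (x - y)) = That 0)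
      have hx : x - y = 0 := by
        have := congrFun (congrArg (fun g : lp (fun _ : I => X) ∞ => (g : ∀ _ : I, X)) this) i
        simpa [lp.single_apply_self] using this
      exact sub_eq_zero.mp hx
    · intro y
      obtain ⟨f, hf⟩ := hbij.surjective (lp.single ∞ i y)
      refine ⟨f i, ?_⟩
      have h2 := hThat f i
      rw [hf] at h2
      rw [← h2, lp.single_apply_self]
  -- the equivalences
  set e : lp (fun _ : I => X) ∞ ≃L[𝕜] lp (fun _ : I => X) ∞ :=
    ContinuousLinearEquiv.ofBijective That (LinearMap.ker_eq_bot.mpr hbij.injective)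
      (LinearMap.range_eq_top.mpr hbij.surjective) with he
  have heT : (e : lp (fun _ : I => X) ∞ →L[𝕜] lp (fun _ : I => X) ∞) = That := rfl
  have hinv : Ring.inverse That = (e.symm : lp (fun _ : I => X) ∞ →L[𝕜] lp (fun _ : I => X) ∞) := by
    rw [← heT, ContinuousLinearMap.ringInverse_eq_inverse, ContinuousLinearMap.inverse_equiv]
  have key : ∀ i, ‖Ring.inverse (T i)‖ ≤ ‖Ring.inverse That‖ := by
    intro i
    set ei : X ≃L[𝕜] X :=
      ContinuousLinearEquiv.ofBijective (T i) (LinearMap.ker_eq_bot.mpr (hbijT i).injective)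
        (LinearMap.range_eq_top.mpr (hbijT i).surjective) with hei
    have heiT : (ei : X →L[𝕜] X) = T i := rfl
    have hinvi : Ring.inverse (T i) = (ei.symm : X →L[𝕜] X) := by
      rw [← heiT, ContinuousLinearMap.ringInverse_eq_inverse, ContinuousLinearMap.inverse_equiv]
    have hsingle : ∀ z : X, ‖(lp.single ∞ i z : lp (fun _ : I => X) ∞)‖ ≤ ‖z‖ := by
      intro z
      refine lp.norm_le_of_forall_le (norm_nonneg z) fun j => ?_
      by_cases hj : j = i
      · subst hj; rw [lp.single_apply_self]
      · rw [lp.single_apply_ne _ _ _ hj]; simp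
    rw [hinvi, hinv]
    refine ContinuousLinearMap.opNorm_le_bound _ (norm_nonneg _) fun x => ?_
    have hsymm : e.symm (lp.single ∞ i x) = lp.single ∞ i (ei.symm x) := by
      apply e.injective
      rw [e.apply_symm_apply]
      apply lp.ext
      funext j
      rw [show e (lp.single ∞ i (ei.symm x)) = That (lp.single ∞ i (ei.symm x)) from rfl,
        hThat]
      by_cases hj : j = i
      · subst hj
        rw [lp.single_apply_self, lp.single_apply_self]
        have : T j (ei.symm x) = ei (ei.symm x) := rfl
        rw [this, ei.apply_symm_apply]
      · rw [lp.single_apply_ne _ _ _ hj, lp.single_apply_ne _ _ _ hj]; simp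
    have h1 : ‖ei.symm x‖ ≤ ‖(lp.single ∞ i (ei.symm x) : lp (fun _ : I => X) ∞)‖ := by
      have h := lp.norm_apply_le_norm (E := fun _ : I => X) (p := ∞) (by simp)
        (lp.single ∞ i (ei.symm x)) i
      rwa [lp.single_apply_self] at h
    have h2 : ‖(e.symm : lp (fun _ : I => X) ∞ →L[𝕜] lp (fun _ : I => X) ∞) (lp.single ∞ i x)‖
        ≤ ‖(e.symm : lp (fun _ : I => X) ∞ →L[𝕜] lp (fun _ : I => X) ∞)‖ * ‖x‖ :=
      le_trans (ContinuousLinearMap.le_opNorm _ _)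
        (mul_le_mul_of_nonneg_left (hsingle x) (norm_nonneg _))
    have h3 : (e.symm : lp (fun _ : I => X) ∞ →L[𝕜] lp (fun _ : I => X) ∞) (lp.single ∞ i x)
        = lp.single ∞ i (ei.symm x) := hsymm
    exact h1.trans (h3 ▸ h2)
  exact ⟨fun i => ⟨hbijT i, key i⟩, ⟨‖Ring.inverse That‖, by rintro - ⟨i, rfl⟩; exact key i⟩⟩
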